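/- arXiv:1204.2888 — 3 statements merged into one kernel-verified Lean document; each statement's English description precedes it below -/
import Mathlib

section
/- Let Δ be an obtuse basis of V, let A ⊆ B ⊆ C ⊆ Δ be subsets, and let (ϖ_γ)_{γ ∈ C∖A} be the dual basis Δ̂_A^C. Then for every H ∈ V, the sum ∑_{S : A ⊆ S ⊆ B} (−1)^{|B∖S|} τ̂_S^C(H), taken over all subsets S of Δ with A ⊆ S ⊆ B, equals 1 if ⟨ϖ_γ, H⟩ ≤ 0 for every γ ∈ B∖A and ⟨ϖ_γ, H⟩ > 0 for every γ ∈ C∖B, and equals 0 otherwise. -/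
open scoped RealInnerProductSpace Classical

variable {V : Type*} [NormedAddCommGroup V] [InnerProductSpace ℝ V] [FiniteDimensional ℝ V]
  [DecidableEq V]

/-- The orthogonal projection of `γ` onto the orthogonal complement of the span of `A`
(denoted `γ_A`). -/
noncomputable def projPerp (A : Finset V) (γ : V) : V :=
  (Submodule.orthogonalProjectionOnto (Submodule.span ℝ (A : Set V))ᗮ γ : V)

/-- The characteristic function `τ_A^B` : equal to `1` if `⟪γ_A, H⟫ > 0` for every
`γ ∈ B \ A`, and `0` otherwise. -/
noncomputable def tauFn (A B : Finset V) (H : V) : ℝ :=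
  if ∀ γ ∈ B \ A, 0 < ⟪projPerp A γ, H⟫ then 1 else 0

/-- The characteristic function `τ̂_A^B` (relative to a family `ϖ` of dual bases):
equal to `1` if `⟪ϖ A B γ, H⟫ > 0` for every `γ ∈ B \ A`, and `0` otherwise. -/
noncomputable def tauHatFn (ϖ : Finset V → Finset V → V → V) (A B : Finset V) (H : V) : ℝ :=
  if ∀ γ ∈ B \ A, 0 < ⟪ϖ A B γ, H⟫ then 1 else 0

/-- `ϖ` is a family of dual bases: for all `A ⊆ B ⊆ Δ`, the family `(ϖ A B γ)_{γ ∈ B \ A}`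
is the dual basis `Δ̂_A^B` of `Δ_A^B = (γ_A)_{γ ∈ B \ A}` in
`V_A^B = span B ⊓ (span A)ᗮ`. -/
def IsDualFamily (Δ : Finset V) (ϖ : Finset V → Finset V → V → V) : Prop :=
  ∀ A B : Finset V, A ⊆ B → B ⊆ Δ → ∀ γ ∈ B \ A,
    (ϖ A B γ ∈ Submodule.span ℝ (B : Set V) ⊓ (Submodule.span ℝ (A : Set V))ᗮ) ∧
    ∀ δ ∈ B \ A, ⟪ϖ A B γ, projPerp A δ⟫ = if δ = γ then 1 else 0


set_option linter.unusedSectionVars false in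
lemma mem_orthogonal_span_finset {A : Finset V} {x : V} (h : ∀ a ∈ A, ⟪x, a⟫ = 0) :
    x ∈ (Submodule.span ℝ (A : Set V))ᗮ := by
  rw [Submodule.mem_orthogonal']
  intro u hu
  induction hu using Submodule.span_induction with
  | mem a ha => exact h a ha
  | zero => simp
  | add u v _ _ hu hv => rw [inner_add_right, hu, hv]; ring
  | smul c u _ hu => rw [real_inner_smul_right, hu]; ring

set_option linter.unusedSectionVars false in
lemma inner_projPerp_of_mem_orthogonal (A : Finset V) (x δ : V)
    (hx : x ∈ (Submodule.span ℝ (A : Set V))ᗮ) :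
    ⟪x, projPerp A δ⟫ = ⟪x, δ⟫ := by
  have hmem : δ - projPerp A δ ∈ Submodule.span ℝ (A : Set V) := by
    have h := Submodule.sub_starProjection_mem_orthogonal
      (K := (Submodule.span ℝ (A : Set V))ᗮ) δ
    rwa [Submodule.orthogonal_orthogonal] at h
  have h0 : ⟪x, δ - projPerp A δ⟫ = 0 := (Submodule.mem_orthogonal' _ x).1 hx _ hmem
  rw [inner_sub_right] at h0
  linarith

set_option linter.unusedSectionVars false in
/-- The dual basis vectors do not depend on the lower set. -/
lemma dual_indep (Δ : Finset V) (ϖ : Finset V → Finset V → V → V)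
    (hϖ : IsDualFamily Δ ϖ) (A S C : Finset V) (hAS : A ⊆ S) (hSC : S ⊆ C)
    (hCΔ : C ⊆ Δ) (γ : V) (hγ : γ ∈ C \ S) : ϖ S C γ = ϖ A C γ := by
  have hAC : A ⊆ C := hAS.trans hSC
  rw [Finset.mem_sdiff] at hγ
  have hγA : γ ∈ C \ A := Finset.mem_sdiff.2 ⟨hγ.1, fun h => hγ.2 (hAS h)⟩
  obtain ⟨hmemS, hdualS⟩ := hϖ S C hSC hCΔ γ (Finset.mem_sdiff.2 hγ)
  obtain ⟨hmemA, hdualA⟩ := hϖ A C hAC hCΔ γ hγA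
  rw [Submodule.mem_inf] at hmemS hmemA
  have hSperp : ∀ s ∈ S, ⟪ϖ A C γ, s⟫ = 0 := by
    intro s hs
    by_cases hsA : s ∈ A
    · exact (Submodule.mem_orthogonal' _ _).1 hmemA.2 s (Submodule.subset_span hsA)
    · have h1 := hdualA s (Finset.mem_sdiff.2 ⟨hSC hs, hsA⟩)
      have hsne : s ≠ γ := fun h => hγ.2 (h ▸ hs)
      rw [if_neg hsne] at h1
      rw [inner_projPerp_of_mem_orthogonal A _ s hmemA.2] at h1
      exact h1
  have hd : ∀ v ∈ C, ⟪ϖ S C γ - ϖ A C γ, v⟫ = 0 := by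
    intro v hv
    rw [inner_sub_left]
    by_cases hvS : v ∈ S
    · rw [(Submodule.mem_orthogonal' _ _).1 hmemS.2 v (Submodule.subset_span hvS),
        hSperp v hvS]; ring
    · have e1 : ⟪ϖ S C γ, v⟫ = if v = γ then 1 else 0 := by
        rw [← inner_projPerp_of_mem_orthogonal S _ v hmemS.2]
        exact hdualS v (Finset.mem_sdiff.2 ⟨hv, hvS⟩)
      have e2 : ⟪ϖ A C γ, v⟫ = if v = γ then 1 else 0 := by
        rw [← inner_projPerp_of_mem_orthogonal A _ v hmemA.2]
        exact hdualA v (Finset.mem_sdiff.2 ⟨hv, fun h => hvS (hAS h)⟩)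
      rw [e1, e2]; ring
  have hmemspan : ϖ S C γ - ϖ A C γ ∈ Submodule.span ℝ (C : Set V) :=
    Submodule.sub_mem _ hmemS.1 hmemA.1
  have horth : ϖ S C γ - ϖ A C γ ∈ (Submodule.span ℝ (C : Set V))ᗮ :=
    mem_orthogonal_span_finset hd
  have hzero : ⟪ϖ S C γ - ϖ A C γ, ϖ S C γ - ϖ A C γ⟫ = 0 :=
    (Submodule.mem_orthogonal' _ _).1 horth _ hmemspan
  exact sub_eq_zero.1 (inner_self_eq_zero.1 hzero)

lemma boole_mul_boole (P Q : Prop) [Decidable P] [Decidable Q] :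
    (if Q then (1 : ℝ) else 0) * (if P then (1 : ℝ) else 0) = if P ∧ Q then 1 else 0 := by
  by_cases hP : P <;> by_cases hQ : Q <;> simp [hP, hQ]

lemma sum_neg_one_pow_prod {ι : Type*} [DecidableEq ι] (s : Finset ι) (g : ι → ℝ) :
    ∑ T ∈ s.powerset, (-1 : ℝ) ^ T.card * ∏ γ ∈ T, g γ = ∏ γ ∈ s, (1 - g γ) := by
  have h := Finset.prod_add (fun γ => -g γ) (fun _ => (1 : ℝ)) s
  simp only [Finset.prod_const_one, mul_one] at h
  calc ∑ T ∈ s.powerset, (-1 : ℝ) ^ T.card * ∏ γ ∈ T, g γ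
      = ∑ T ∈ s.powerset, ∏ γ ∈ T, (-g γ) := by
        refine Finset.sum_congr rfl fun T _ => ?_
        have : ∀ γ ∈ T, -g γ = (-1) * g γ := fun γ _ => by ring
        rw [Finset.prod_congr rfl this, Finset.prod_mul_distrib, Finset.prod_const]
    _ = ∏ γ ∈ s, (-g γ + 1) := h.symm
    _ = ∏ γ ∈ s, (1 - g γ) := by refine Finset.prod_congr rfl fun γ _ => by ring

/-- For `A ⊆ B ⊆ C ⊆ Δ`, with `(ϖ A C γ)_{γ ∈ C∖A}` the dual basis
`Δ̂_A^C`, the sum `∑_{S : A ⊆ S ⊆ B} (−1)^{|B∖S|} τ̂_S^C(H)` equals `1` if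
`⟪ϖ A C γ, H⟫ ≤ 0` for every `γ ∈ B∖A` and `⟪ϖ A C γ, H⟫ > 0` for every `γ ∈ C∖B`,
and equals `0` otherwise. -/
theorem stmt_7
    (Δ : Finset V)
    (hli : LinearIndependent ℝ ((↑) : ↥(Δ : Set V) → V))
    (hspan : Submodule.span ℝ (Δ : Set V) = ⊤)
    (hobtuse : ∀ α ∈ Δ, ∀ β ∈ Δ, α ≠ β → ⟪α, β⟫ ≤ 0)
    (ϖ : Finset V → Finset V → V → V) (hϖ : IsDualFamily Δ ϖ)
    (A B C : Finset V) (hAB : A ⊆ B) (hBC : B ⊆ C) (hCΔ : C ⊆ Δ)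
    (H : V) :
    ∑ S ∈ Finset.Icc A B, (-1 : ℝ) ^ (B \ S).card * tauHatFn ϖ S C H =
      if (∀ γ ∈ B \ A, ⟪ϖ A C γ, H⟫ ≤ 0) ∧ (∀ γ ∈ C \ B, 0 < ⟪ϖ A C γ, H⟫)
      then 1 else 0 := by
  classical
  set g : V → ℝ := fun γ => if 0 < ⟪ϖ A C γ, H⟫ then (1 : ℝ) else 0 with hg
  have htau : ∀ S ∈ Finset.Icc A B, tauHatFn ϖ S C H = ∏ γ ∈ C \ S, g γ := by
    intro S hS
    rw [Finset.mem_Icc] at hS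
    have heq : ∀ γ ∈ C \ S, ϖ S C γ = ϖ A C γ := fun γ hγ =>
      dual_indep Δ ϖ hϖ A S C hS.1 (hS.2.trans hBC) hCΔ γ hγ
    rw [hg]
    rw [Finset.prod_boole]
    unfold tauHatFn
    exact if_congr (forall₂_congr fun γ hγ => by rw [heq γ hγ]) rfl rfl
  rw [Finset.sum_congr rfl fun S hS => by rw [htau S hS]]
  have hre : ∑ S ∈ Finset.Icc A B, (-1 : ℝ) ^ (B \ S).card * ∏ γ ∈ C \ S, g γ
      = ∑ T ∈ (B \ A).powerset, (-1 : ℝ) ^ T.card * ((∏ γ ∈ C \ B, g γ) * ∏ γ ∈ T, g γ) := by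
    refine Finset.sum_bij' (fun S _ => B \ S) (fun T _ => B \ T) ?_ ?_ ?_ ?_ ?_
    · intro S hS
      rw [Finset.mem_Icc] at hS
      exact Finset.mem_powerset.2 (Finset.sdiff_subset_sdiff le_rfl hS.1)
    · intro T hT
      rw [Finset.mem_powerset] at hT
      rw [Finset.mem_Icc]
      refine ⟨?_, Finset.sdiff_subset⟩
      intro a ha
      rw [Finset.mem_sdiff]
      exact ⟨hAB ha, fun haT => (Finset.mem_sdiff.1 (hT haT)).2 ha⟩
    · intro S hS
      rw [Finset.mem_Icc] at hS
      exact Finset.sdiff_sdiff_eq_self hS.2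
    · intro T hT
      rw [Finset.mem_powerset] at hT
      exact Finset.sdiff_sdiff_eq_self (hT.trans Finset.sdiff_subset)
    · intro S hS
      rw [Finset.mem_Icc] at hS
      congr 1
      have hunion : C \ S = (C \ B) ∪ (B \ S) := by
        ext x
        simp only [Finset.mem_sdiff, Finset.mem_union]
        constructor
        · rintro ⟨hxC, hxS⟩
          by_cases hxB : x ∈ B
          · exact Or.inr ⟨hxB, hxS⟩
          · exact Or.inl ⟨hxC, hxB⟩
        · rintro (⟨hxC, hxB⟩ | ⟨hxB, hxS⟩)
          · exact ⟨hxC, fun hxS => hxB (hS.2 hxS)⟩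
          · exact ⟨hBC hxB, hxS⟩
      have hdisj : Disjoint (C \ B) (B \ S) :=
        Finset.disjoint_left.2 fun x hx hx' =>
          (Finset.mem_sdiff.1 hx).2 (Finset.mem_sdiff.1 hx').1
      rw [hunion, Finset.prod_union hdisj]
  rw [hre]
  have hfactor : ∑ T ∈ (B \ A).powerset,
      (-1 : ℝ) ^ T.card * ((∏ γ ∈ C \ B, g γ) * ∏ γ ∈ T, g γ)
      = (∏ γ ∈ C \ B, g γ) * ∑ T ∈ (B \ A).powerset, (-1 : ℝ) ^ T.card * ∏ γ ∈ T, g γ := by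
    rw [Finset.mul_sum]
    exact Finset.sum_congr rfl fun T _ => by ring
  rw [hfactor, sum_neg_one_pow_prod]
  have h1 : ∀ γ ∈ B \ A, (1 : ℝ) - g γ = if ⟪ϖ A C γ, H⟫ ≤ 0 then 1 else 0 := by
    intro γ _
    simp only [hg]
    by_cases h : 0 < ⟪ϖ A C γ, H⟫
    · rw [if_pos h, if_neg (not_le.2 h)]; ring
    · rw [if_neg h, if_pos (not_lt.1 h)]; ring
  have h2 : (∏ γ ∈ C \ B, g γ) = if ∀ γ ∈ C \ B, 0 < ⟪ϖ A C γ, H⟫ then 1 else 0 := by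
    simp only [hg]
    rw [Finset.prod_boole]
  rw [Finset.prod_congr rfl h1, Finset.prod_boole, Finset.prod_boole]
  rw [boole_mul_boole]
end

section
/- Let Δ be an obtuse basis of V, let A ⊆ B ⊆ C ⊆ Δ be subsets, let X ∈ V, and let (ϖ_γ)_{γ ∈ C∖A} be the dual basis Δ̂_A^C. Let C(A,B,C;X) be the set of H ∈ V such that: ⟨γ_A, H⟩ > 0 for every γ ∈ B∖A; ⟨γ_A, H⟩ ≤ 0 for every γ ∈ C∖B; ⟨ϖ_γ, H − X⟩ > 0 for every γ ∈ C∖B; and ⟨ϖ_γ, H − X⟩ ≤ 0 for every γ ∈ B∖A. Then: (1) there exists a constant c > 0, depending only on V, Δ, A, B, C (not on X), such that every H ∈ C(A,B,C;X) satisfies ‖pr(H)‖ ≤ c‖pr(X)‖, where pr denotes the orthogonal projection onto V_A^C; (2) if ⟨α, X⟩ ≥ 0 for every α ∈ Δ, then C(A,B,C;X) is empty unless B = C; (3) if X = 0, then C(A,B,C;X) is empty unless A = C. -/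
open scoped RealInnerProductSpace Classical

variable {V : Type*} [NormedAddCommGroup V] [InnerProductSpace ℝ V] [FiniteDimensional ℝ V]
  [DecidableEq V]

/-- Membership in the convex set `C(A, B, C; X)` of Statement 9. -/
def CMember (ϖ : Finset V → Finset V → V → V) (A B C : Finset V) (X H : V) : Prop :=
  (∀ γ ∈ B \ A, 0 < ⟪projPerp A γ, H⟫) ∧
  (∀ γ ∈ C \ B, ⟪projPerp A γ, H⟫ ≤ 0) ∧
  (∀ γ ∈ C \ B, 0 < ⟪ϖ A C γ, H - X⟫) ∧
  (∀ γ ∈ B \ A, ⟪ϖ A C γ, H - X⟫ ≤ 0)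

/-! ### Auxiliary lemmas -/

section Aux

open Submodule

lemma projPerp_mem_orthogonal (A : Finset V) (γ : V) :
    projPerp A γ ∈ (span ℝ (A : Set V))ᗮ := SetLike.coe_mem _

lemma sub_projPerp_mem_span (A : Finset V) (γ : V) :
    γ - projPerp A γ ∈ span ℝ (A : Set V) := by
  have h := sub_starProjection_mem_orthogonal (K := (span ℝ (A : Set V))ᗮ) γ
  rwa [Submodule.orthogonal_orthogonal] at h

lemma projPerp_eq (A : Finset V) {γ u : V} (h1 : u ∈ (span ℝ (A : Set V))ᗮ)
    (h2 : γ - u ∈ span ℝ (A : Set V)) : projPerp A γ = u :=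
  eq_starProjection_of_mem_of_inner_eq_zero h1 fun w hw =>
    (Submodule.mem_orthogonal _ _).mp hw _ h2

lemma projPerp_of_mem_orthogonal {A : Finset V} {w : V}
    (hw : w ∈ (span ℝ (A : Set V))ᗮ) : projPerp A w = w :=
  starProjection_eq_self_iff.mpr hw

lemma projPerp_eq_zero {A : Finset V} {γ : V} (h : γ ∈ span ℝ (A : Set V)) :
    projPerp A γ = 0 := by
  have : γ ∈ ((span ℝ (A : Set V))ᗮ)ᗮ := by rwa [Submodule.orthogonal_orthogonal]
  simp [projPerp, Submodule.orthogonalProjectionOnto_apply_of_mem_orthogonal this]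

lemma projPerp_empty (γ : V) : projPerp (∅ : Finset V) γ = γ := by
  apply projPerp_of_mem_orthogonal
  simp

lemma projPerp_sum (A : Finset V) (s : Finset V) (f : V → ℝ) :
    projPerp A (∑ γ ∈ s, f γ • γ) = ∑ γ ∈ s, f γ • projPerp A γ := by
  simp only [projPerp, map_sum, map_smul]
  push_cast
  rfl

/-- The key step: projecting away `insert α A` is projecting away `A` and then away
`projPerp A α`. -/
lemma projPerp_insert (A : Finset V) (α γ : V) :
    projPerp (insert α A) γ = projPerp A γ -
      (⟪projPerp A α, projPerp A γ⟫ / ⟪projPerp A α, projPerp A α⟫) • projPerp A α := by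
  set a := projPerp A α with ha
  set g := projPerp A γ with hg
  set c : ℝ := ⟪a, g⟫ / ⟪a, a⟫ with hc
  have hAK : span ℝ (A : Set V) ≤ span ℝ ((insert α A : Finset V) : Set V) := by
    apply span_mono; rw [Finset.coe_insert]; exact Set.subset_insert _ _
  have hαK : α ∈ span ℝ ((insert α A : Finset V) : Set V) :=
    subset_span (by simp)
  have haK : a ∈ span ℝ ((insert α A : Finset V) : Set V) := by
    have : a = α - (α - a) := by abel
    rw [this]
    exact sub_mem hαK (hAK (sub_projPerp_mem_span A α))
  have hsubmem : g - c • a ∈ (span ℝ (A : Set V))ᗮ :=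
    sub_mem (projPerp_mem_orthogonal A γ)
      (Submodule.smul_mem _ _ (projPerp_mem_orthogonal A α))
  apply projPerp_eq
  · -- orthogonality
    rw [Finset.coe_insert, Submodule.span_insert, ← Submodule.inf_orthogonal,
      Submodule.mem_inf]
    refine ⟨Submodule.mem_orthogonal_singleton_iff_inner_right.mpr ?_, hsubmem⟩
    have h1 : α = (α - a) + a := by abel
    rw [h1, inner_add_left]
    have h2 : ⟪α - a, g - c • a⟫ = 0 :=
      (Submodule.mem_orthogonal _ _).mp hsubmem _ (sub_projPerp_mem_span A α)
    rw [h2, zero_add, inner_sub_right, real_inner_smul_right]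
    rcases eq_or_ne (⟪a, a⟫ : ℝ) 0 with h0 | h0
    · have h3 : a = 0 := inner_self_eq_zero.mp h0
      simp [h3]
    · rw [hc]; field_simp; ring
  · -- γ minus it lies in the span
    have h1 : γ - (g - c • a) = (γ - g) + c • a := by abel
    rw [h1]
    exact add_mem (hAK (sub_projPerp_mem_span A γ)) (Submodule.smul_mem _ _ haK)

/-- Combined induction: projections of an obtuse family stay obtuse, and stay
nonnegative against a vector with nonnegative inner products against the family. -/
lemma key_induction (A : Finset V) (γ δ X : V)
    (ho : ∀ α ∈ A, ∀ β ∈ A, α ≠ β → ⟪α, β⟫ ≤ 0)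
    (hg : ∀ α ∈ A, ⟪α, γ⟫ ≤ 0) (hd : ∀ α ∈ A, ⟪α, δ⟫ ≤ 0) (hgd : ⟪γ, δ⟫ ≤ 0)
    (hX : ∀ α ∈ A, 0 ≤ ⟪α, X⟫) (hgX : 0 ≤ ⟪γ, X⟫) :
    ⟪projPerp A γ, projPerp A δ⟫ ≤ 0 ∧ 0 ≤ ⟪projPerp A γ, X⟫ := by
  induction A using Finset.induction_on generalizing γ δ X with
  | empty => simpa [projPerp_empty] using ⟨hgd, hgX⟩
  | @insert α s hαs IH =>
    have hms : ∀ β ∈ s, β ∈ insert α s := fun β hβ => Finset.mem_insert_of_mem hβ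
    have hmα : α ∈ insert α s := Finset.mem_insert_self α s
    have hos : ∀ a ∈ s, ∀ b ∈ s, a ≠ b → ⟪a, b⟫ ≤ 0 :=
      fun a ha b hb hab => ho a (hms a ha) b (hms b hb) hab
    have hsα : ∀ β ∈ s, ⟪β, α⟫ ≤ 0 := fun β hβ =>
      ho β (hms β hβ) α hmα (fun h => hαs (h ▸ hβ))
    have hsγ : ∀ β ∈ s, ⟪β, γ⟫ ≤ 0 := fun β hβ => hg β (hms β hβ)
    have hsδ : ∀ β ∈ s, ⟪β, δ⟫ ≤ 0 := fun β hβ => hd β (hms β hβ)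
    have hsX : ∀ β ∈ s, 0 ≤ ⟪β, X⟫ := fun β hβ => hX β (hms β hβ)
    obtain ⟨Hgd, HgX⟩ := IH γ δ X hos hsγ hsδ hgd hsX hgX
    obtain ⟨Hag, HaX⟩ := IH α γ X hos hsα hsγ (hg α hmα) hsX (hX α hmα)
    obtain ⟨Had, -⟩ := IH α δ X hos hsα hsδ (hd α hmα) hsX (hX α hmα)
    rw [projPerp_insert, projPerp_insert]
    set a := projPerp s α with hadef
    set g := projPerp s γ with hgdef
    set d := projPerp s δ with hddef
    have hT : (0:ℝ) ≤ ⟪a, a⟫ := real_inner_self_nonneg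
    constructor
    · have hexp : ⟪g - (⟪a, g⟫ / ⟪a, a⟫) • a, d - (⟪a, d⟫ / ⟪a, a⟫) • a⟫
          = ⟪g, d⟫ - ⟪a, g⟫ * ⟪a, d⟫ / ⟪a, a⟫ := by
        rcases eq_or_ne (⟪a, a⟫ : ℝ) 0 with h0 | h0
        · have h3 : a = 0 := inner_self_eq_zero.mp h0
          simp [h3]
        · simp only [inner_sub_left, inner_sub_right, real_inner_smul_left,
            real_inner_smul_right]
          rw [real_inner_comm g a]
          field_simp
          try ring
      rw [hexp]
      have h4 : 0 ≤ ⟪a, g⟫ * ⟪a, d⟫ / ⟪a, a⟫ :=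
        div_nonneg (mul_nonneg_iff.mpr (Or.inr ⟨Hag, Had⟩)) hT
      linarith
    · have hexp : ⟪g - (⟪a, g⟫ / ⟪a, a⟫) • a, X⟫
          = ⟪g, X⟫ - (⟪a, g⟫ / ⟪a, a⟫) * ⟪a, X⟫ := by
        rw [inner_sub_left, real_inner_smul_left]
      rw [hexp]
      have hc : ⟪a, g⟫ / ⟪a, a⟫ ≤ 0 := div_nonpos_iff.mpr (Or.inr ⟨Hag, hT⟩)
      have h5 : (⟪a, g⟫ / ⟪a, a⟫) * ⟪a, X⟫ ≤ 0 :=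
        mul_nonpos_iff.mpr (Or.inr ⟨hc, HaX⟩)
      linarith

lemma obtuse_projPerp {Δ : Finset V}
    (hobtuse : ∀ α ∈ Δ, ∀ β ∈ Δ, α ≠ β → ⟪α, β⟫ ≤ 0)
    {A : Finset V} (hA : A ⊆ Δ) {γ δ : V} (hγ : γ ∈ Δ) (hδ : δ ∈ Δ)
    (hγA : γ ∉ A) (hδA : δ ∉ A) (hne : γ ≠ δ) :
    ⟪projPerp A γ, projPerp A δ⟫ ≤ 0 :=
  (key_induction A γ δ 0
    (fun a ha b hb hab => hobtuse a (hA ha) b (hA hb) hab)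
    (fun a ha => hobtuse a (hA ha) γ hγ (fun h => hγA (h ▸ ha)))
    (fun a ha => hobtuse a (hA ha) δ hδ (fun h => hδA (h ▸ ha)))
    (hobtuse γ hγ δ hδ hne)
    (fun a _ => by simp) (by simp)).1

lemma projPerp_inner_nonneg {Δ : Finset V}
    (hobtuse : ∀ α ∈ Δ, ∀ β ∈ Δ, α ≠ β → ⟪α, β⟫ ≤ 0)
    {A : Finset V} (hA : A ⊆ Δ) {γ : V} (hγ : γ ∈ Δ) (hγA : γ ∉ A)
    {X : V} (hX : ∀ α ∈ Δ, 0 ≤ ⟪α, X⟫) :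
    0 ≤ ⟪projPerp A γ, X⟫ :=
  (key_induction A γ 0 X
    (fun a ha b hb hab => hobtuse a (hA ha) b (hA hb) hab)
    (fun a ha => hobtuse a (hA ha) γ hγ (fun h => hγA (h ▸ ha)))
    (fun a _ => by simp) (by simp)
    (fun a ha => hX a (hA ha)) (hX γ hγ)).2

lemma projPerp_mem_W {A C : Finset V} (hAC : A ⊆ C) {γ : V} (hγ : γ ∈ C) :
    projPerp A γ ∈ span ℝ (C : Set V) ⊓ (span ℝ (A : Set V))ᗮ := by
  refine ⟨?_, projPerp_mem_orthogonal A γ⟩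
  have h1 : projPerp A γ = γ - (γ - projPerp A γ) := by abel
  rw [h1]
  exact sub_mem (subset_span hγ)
    (span_mono (Finset.coe_subset.mpr hAC) (sub_projPerp_mem_span A γ))

lemma inner_pr (W : Submodule ℝ V) {w : V} (Y : V) (hw : w ∈ W) :
    ⟪w, (Submodule.orthogonalProjectionOnto W Y : V)⟫ = ⟪w, Y⟫ := by
  have h := (Submodule.mem_orthogonal W _).mp
    (sub_starProjection_mem_orthogonal (K := W) Y) w hw
  rw [inner_sub_right, Submodule.starProjection_apply] at h
  linarith

/-- Expansion of the orthogonal projection onto `V_A^C` in terms of the dual basis. -/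
lemma pr_expand {Δ : Finset V} {ϖ : Finset V → Finset V → V → V}
    (hϖ : IsDualFamily Δ ϖ) {A C : Finset V} (hAC : A ⊆ C) (hCΔ : C ⊆ Δ) (Y : V) :
    (Submodule.orthogonalProjectionOnto (span ℝ (C : Set V) ⊓ (span ℝ (A : Set V))ᗮ) Y : V)
      = ∑ γ ∈ C \ A, ⟪ϖ A C γ, Y⟫ • projPerp A γ := by
  set W := span ℝ (C : Set V) ⊓ (span ℝ (A : Set V))ᗮ with hW
  set y : V := (Submodule.orthogonalProjectionOnto W Y : V) with hy
  have hyW : y ∈ W := SetLike.coe_mem _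
  -- representation with some coefficients
  obtain ⟨f, hf⟩ := mem_span_finset.mp hyW.1
  have hyorth : y ∈ (span ℝ (A : Set V))ᗮ := hyW.2
  have hrep : y = ∑ γ ∈ C \ A, f γ • projPerp A γ := by
    have h1 : y = projPerp A y := (projPerp_of_mem_orthogonal hyorth).symm
    have h2 : projPerp A y = ∑ γ ∈ C, f γ • projPerp A γ := by
      rw [← hf.2, projPerp_sum]
    rw [h1, h2]
    refine (Finset.sum_subset (Finset.sdiff_subset) ?_).symm
    intro x hx hnx
    have hxA : x ∈ A := by
      by_contra hxA
      exact hnx (Finset.mem_sdiff.mpr ⟨hx, hxA⟩)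
    rw [projPerp_eq_zero (subset_span hxA), smul_zero]
  -- coefficients are the dual pairings
  have hcoef : ∀ γ ∈ C \ A, f γ = ⟪ϖ A C γ, Y⟫ := by
    intro γ hγ
    obtain ⟨hϖmem, hϖdual⟩ := hϖ A C hAC hCΔ γ hγ
    have h3 : ⟪ϖ A C γ, Y⟫ = ⟪ϖ A C γ, y⟫ := (inner_pr W Y hϖmem).symm
    rw [h3, hrep, inner_sum]
    have h4 : ∀ δ ∈ C \ A, ⟪ϖ A C γ, f δ • projPerp A δ⟫
        = if δ = γ then f δ else 0 := by
      intro δ hδ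
      rw [real_inner_smul_right, hϖdual δ hδ]
      by_cases h : δ = γ <;> simp [h]
    rw [Finset.sum_congr rfl h4, Finset.sum_ite_eq' (C \ A) γ f, if_pos hγ]
  rw [hrep]
  exact Finset.sum_congr rfl fun γ hγ => by rw [hcoef γ hγ]

end Aux

/-- (1) There is `c > 0`, independent of `X`, such that any
`H ∈ C(A,B,C;X)` satisfies `‖pr H‖ ≤ c ‖pr X‖` where `pr` is the orthogonal projection onto
`V_A^C = span C ⊓ (span A)ᗮ`; (2) if `⟪α, X⟫ ≥ 0` for all `α ∈ Δ` then `C(A,B,C;X)` is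
empty unless `B = C`; (3) if `X = 0` then `C(A,B,C;X)` is empty unless `A = C`. -/
theorem stmt_9
    (Δ : Finset V)
    (hli : LinearIndependent ℝ ((↑) : ↥(Δ : Set V) → V))
    (hspan : Submodule.span ℝ (Δ : Set V) = ⊤)
    (hobtuse : ∀ α ∈ Δ, ∀ β ∈ Δ, α ≠ β → ⟪α, β⟫ ≤ 0)
    (ϖ : Finset V → Finset V → V → V) (hϖ : IsDualFamily Δ ϖ)
    (A B C : Finset V) (hAB : A ⊆ B) (hBC : B ⊆ C) (hCΔ : C ⊆ Δ) :
    (∃ c : ℝ, 0 < c ∧ ∀ X H : V, CMember ϖ A B C X H →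
      ‖(Submodule.orthogonalProjectionOnto
          (Submodule.span ℝ (C : Set V) ⊓ (Submodule.span ℝ (A : Set V))ᗮ) H : V)‖ ≤
        c * ‖(Submodule.orthogonalProjectionOnto
          (Submodule.span ℝ (C : Set V) ⊓ (Submodule.span ℝ (A : Set V))ᗮ) X : V)‖) ∧
    (∀ X : V, (∀ α ∈ Δ, 0 ≤ ⟪α, X⟫) → B ≠ C → ∀ H : V, ¬ CMember ϖ A B C X H) ∧
    (A ≠ C → ∀ H : V, ¬ CMember ϖ A B C (0 : V) H) := by
  have hAC : A ⊆ C := hAB.trans hBC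
  set W : Submodule ℝ V :=
    Submodule.span ℝ (C : Set V) ⊓ (Submodule.span ℝ (A : Set V))ᗮ with hWdef
  -- split C \ A
  have hsplit : (C \ B) ∪ (B \ A) = C \ A := Finset.sdiff_union_sdiff_cancel hBC hAB
  have hdisj : Disjoint (C \ B) (B \ A) := by
    rw [Finset.disjoint_left]
    intro x hx hx'
    exact (Finset.mem_sdiff.mp hx).2 (Finset.mem_sdiff.mp hx').1
  have hmemW : ∀ γ ∈ C \ A, projPerp A γ ∈ W := fun γ hγ =>
    projPerp_mem_W hAC (Finset.mem_sdiff.mp hγ).1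
  refine ⟨⟨1, one_pos, ?_⟩, ?_, ?_⟩
  · -- Part (1)
    intro X H hm
    obtain ⟨hm1, hm2, hm3, hm4⟩ := hm
    set h : V := (Submodule.orthogonalProjectionOnto W H : V) with hhdef
    set x : V := (Submodule.orthogonalProjectionOnto W X : V) with hxdef
    have hexpH : h = ∑ γ ∈ C \ A, ⟪ϖ A C γ, H⟫ • projPerp A γ := pr_expand hϖ hAC hCΔ H
    have hexpX : x = ∑ γ ∈ C \ A, ⟪ϖ A C γ, X⟫ • projPerp A γ := pr_expand hϖ hAC hCΔ X
    have hinner : ∀ γ ∈ C \ A, ⟪projPerp A γ, h⟫ = ⟪projPerp A γ, H⟫ :=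
      fun γ hγ => inner_pr W H (hmemW γ hγ)
    have hhh : ⟪h, h⟫ = ∑ γ ∈ C \ A, ⟪ϖ A C γ, H⟫ * ⟪projPerp A γ, H⟫ := by
      nth_rewrite 1 [hexpH]
      rw [sum_inner]
      exact Finset.sum_congr rfl fun γ hγ => by
        rw [real_inner_smul_left, hinner γ hγ]
    have hxh : ⟪x, h⟫ = ∑ γ ∈ C \ A, ⟪ϖ A C γ, X⟫ * ⟪projPerp A γ, H⟫ := by
      nth_rewrite 1 [hexpX]
      rw [sum_inner]
      exact Finset.sum_congr rfl fun γ hγ => by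
        rw [real_inner_smul_left, hinner γ hγ]
    have hle : ⟪h, h⟫ ≤ ⟪x, h⟫ := by
      rw [hhh, hxh]
      refine Finset.sum_le_sum ?_
      intro γ hγ
      obtain ⟨hγC, hγA⟩ := Finset.mem_sdiff.mp hγ
      by_cases hγB : γ ∈ B
      · have hγBA : γ ∈ B \ A := Finset.mem_sdiff.mpr ⟨hγB, hγA⟩
        have h1 : ⟪ϖ A C γ, H⟫ - ⟪ϖ A C γ, X⟫ ≤ 0 := by
          have := hm4 γ hγBA; rwa [inner_sub_right] at this
        have h2 : 0 < ⟪projPerp A γ, H⟫ := hm1 γ hγBA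
        nlinarith
      · have hγCB : γ ∈ C \ B := Finset.mem_sdiff.mpr ⟨hγC, hγB⟩
        have h1 : 0 < ⟪ϖ A C γ, H⟫ - ⟪ϖ A C γ, X⟫ := by
          have := hm3 γ hγCB; rwa [inner_sub_right] at this
        have h2 : ⟪projPerp A γ, H⟫ ≤ 0 := hm2 γ hγCB
        nlinarith
    have hcs : ⟪x, h⟫ ≤ ‖x‖ * ‖h‖ := real_inner_le_norm x h
    have hnorm : ⟪h, h⟫ = ‖h‖ * ‖h‖ := real_inner_self_eq_norm_mul_norm h
    rw [one_mul]
    nlinarith [norm_nonneg h, norm_nonneg x]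
  · -- Part (2)
    intro X hX hne H hm
    obtain ⟨hm1, hm2, hm3, hm4⟩ := hm
    obtain ⟨γ₀, hγ₀C, hγ₀B⟩ := Finset.exists_of_ssubset (hBC.ssubset_of_ne hne)
    have hγ₀ : γ₀ ∈ C \ B := Finset.mem_sdiff.mpr ⟨hγ₀C, hγ₀B⟩
    set c : V → ℝ := fun γ => ⟪ϖ A C γ, H - X⟫ with hcdef
    set y : V := (Submodule.orthogonalProjectionOnto W (H - X) : V) with hydef
    have hexpY : y = ∑ γ ∈ C \ A, c γ • projPerp A γ := pr_expand hϖ hAC hCΔ (H - X)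
    set u : V := ∑ γ ∈ C \ B, c γ • projPerp A γ with hudef
    have hCBsub : (C \ B) ⊆ (C \ A) := by rw [← hsplit]; exact Finset.subset_union_left
    -- ⟪y, u⟫ ≤ 0
    have hyu_le : ⟪y, u⟫ ≤ 0 := by
      rw [hudef, inner_sum]
      refine Finset.sum_nonpos ?_
      intro j hj
      obtain ⟨hjC, hjB⟩ := Finset.mem_sdiff.mp hj
      have hjA : j ∉ A := fun h => hjB (hAB h)
      rw [real_inner_smul_right]
      have h1 : ⟪y, projPerp A j⟫ = ⟪projPerp A j, H - X⟫ := by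
        rw [real_inner_comm]
        exact inner_pr W (H - X) (hmemW j (hCBsub hj))
      have h2 : ⟪projPerp A j, H⟫ ≤ 0 := hm2 j hj
      have h3 : 0 ≤ ⟪projPerp A j, X⟫ :=
        projPerp_inner_nonneg hobtuse (hAC.trans hCΔ) (hCΔ hjC) hjA hX
      have h4 : ⟪projPerp A j, H - X⟫ ≤ 0 := by
        rw [inner_sub_right]; linarith
      have h5 : 0 < c j := hm3 j hj
      rw [h1]
      exact mul_nonpos_iff.mpr (Or.inl ⟨le_of_lt h5, h4⟩)
    -- ⟪u, u⟫ ≤ ⟪y, u⟫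
    have hsum_split : y = u + ∑ γ ∈ B \ A, c γ • projPerp A γ := by
      rw [hexpY, ← hsplit, Finset.sum_union hdisj]
    have hyu_ge : ⟪u, u⟫ ≤ ⟪y, u⟫ := by
      rw [hsum_split, inner_add_left]
      have : 0 ≤ ⟪∑ γ ∈ B \ A, c γ • projPerp A γ, u⟫ := by
        rw [sum_inner]
        refine Finset.sum_nonneg ?_
        intro i hi
        obtain ⟨hiB, hiA⟩ := Finset.mem_sdiff.mp hi
        rw [real_inner_smul_left, hudef, inner_sum]
        refine mul_nonneg_iff.mpr (Or.inr ⟨hm4 i hi, ?_⟩)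
        refine Finset.sum_nonpos ?_
        intro j hj
        obtain ⟨hjC, hjB⟩ := Finset.mem_sdiff.mp hj
        have hjA : j ∉ A := fun h => hjB (hAB h)
        rw [real_inner_smul_right]
        have hij : i ≠ j := fun h => hjB (h ▸ hiB)
        have hobt : ⟪projPerp A i, projPerp A j⟫ ≤ 0 :=
          obtuse_projPerp hobtuse (hAC.trans hCΔ) (hCΔ (hBC hiB)) (hCΔ hjC)
            hiA hjA hij
        exact mul_nonpos_iff.mpr (Or.inl ⟨le_of_lt (hm3 j hj), hobt⟩)
      linarith
    have hu0 : u = 0 := real_inner_self_nonpos.mp (le_trans hyu_ge hyu_le)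
    -- but pairing with the dual vector of γ₀ is positive
    obtain ⟨-, hϖdual⟩ := hϖ A C hAC hCΔ γ₀ (hCBsub hγ₀)
    have hpair : ⟪ϖ A C γ₀, u⟫ = c γ₀ := by
      rw [hudef, inner_sum]
      have h4 : ∀ δ ∈ C \ B, ⟪ϖ A C γ₀, c δ • projPerp A δ⟫
          = if δ = γ₀ then c δ else 0 := by
        intro δ hδ
        rw [real_inner_smul_right, hϖdual δ (hCBsub hδ)]
        by_cases h : δ = γ₀ <;> simp [h]
      rw [Finset.sum_congr rfl h4, Finset.sum_ite_eq' (C \ B) γ₀ c, if_pos hγ₀]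
    rw [hu0, inner_zero_right] at hpair
    exact absurd (hm3 γ₀ hγ₀) (by rw [hcdef] at hpair; simp [← hpair])
  · -- Part (3)
    intro hne H hm
    obtain ⟨hm1, hm2, hm3, hm4⟩ := hm
    set h : V := (Submodule.orthogonalProjectionOnto W H : V) with hhdef
    have hexpH : h = ∑ γ ∈ C \ A, ⟪ϖ A C γ, H⟫ • projPerp A γ := pr_expand hϖ hAC hCΔ H
    have hinner : ∀ γ ∈ C \ A, ⟪projPerp A γ, h⟫ = ⟪projPerp A γ, H⟫ :=
      fun γ hγ => inner_pr W H (hmemW γ hγ)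
    have hhh : ⟪h, h⟫ = ∑ γ ∈ C \ A, ⟪ϖ A C γ, H⟫ * ⟪projPerp A γ, H⟫ := by
      nth_rewrite 1 [hexpH]
      rw [sum_inner]
      exact Finset.sum_congr rfl fun γ hγ => by
        rw [real_inner_smul_left, hinner γ hγ]
    have hsub0 : ∀ γ, ⟪ϖ A C γ, H - (0:V)⟫ = ⟪ϖ A C γ, H⟫ := fun γ => by rw [sub_zero]
    have hle : ⟪h, h⟫ ≤ 0 := by
      rw [hhh]
      refine Finset.sum_nonpos ?_
      intro γ hγ
      obtain ⟨hγC, hγA⟩ := Finset.mem_sdiff.mp hγ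
      by_cases hγB : γ ∈ B
      · have hγBA : γ ∈ B \ A := Finset.mem_sdiff.mpr ⟨hγB, hγA⟩
        have h1 : ⟪ϖ A C γ, H⟫ ≤ 0 := by rw [← hsub0]; exact hm4 γ hγBA
        exact mul_nonpos_iff.mpr (Or.inr ⟨h1, le_of_lt (hm1 γ hγBA)⟩)
      · have hγCB : γ ∈ C \ B := Finset.mem_sdiff.mpr ⟨hγC, hγB⟩
        have h1 : 0 < ⟪ϖ A C γ, H⟫ := by rw [← hsub0]; exact hm3 γ hγCB
        exact mul_nonpos_iff.mpr (Or.inl ⟨le_of_lt h1, hm2 γ hγCB⟩)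
    have hh0 : h = 0 := real_inner_self_nonpos.mp hle
    obtain ⟨γ₀, hγ₀C, hγ₀A⟩ := Finset.exists_of_ssubset (hAC.ssubset_of_ne hne)
    have hγ₀ : γ₀ ∈ C \ A := Finset.mem_sdiff.mpr ⟨hγ₀C, hγ₀A⟩
    by_cases hγ₀B : γ₀ ∈ B
    · have hγBA : γ₀ ∈ B \ A := Finset.mem_sdiff.mpr ⟨hγ₀B, hγ₀A⟩
      have h1 : 0 < ⟪projPerp A γ₀, H⟫ := hm1 γ₀ hγBA
      have h2 : ⟪projPerp A γ₀, H⟫ = 0 := by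
        rw [← hinner γ₀ hγ₀, hh0, inner_zero_right]
      linarith
    · have hγCB : γ₀ ∈ C \ B := Finset.mem_sdiff.mpr ⟨hγ₀C, hγ₀B⟩
      have h1 : 0 < ⟪ϖ A C γ₀, H⟫ := by rw [← hsub0]; exact hm3 γ₀ hγCB
      obtain ⟨hϖmem, -⟩ := hϖ A C hAC hCΔ γ₀ hγ₀
      have h2 : ⟪ϖ A C γ₀, H⟫ = ⟪ϖ A C γ₀, h⟫ := (inner_pr W H hϖmem).symm
      rw [h2, hh0, inner_zero_right] at h1
      linarith
end

section
/- Let Δ be an obtuse basis of V and let θ be a linear isometry of V with θ(Δ) = Δ. Let Q ⊆ Δ, let Q₀ := Q ∩ θ⁻¹(Q), and let Q⁺ be the union of the θ-orbits of the elements of Q (the smallest θ-stable subset of Δ containing Q). Define q : V → V by letting q(X) be the orthogonal projection of X − θ(X) onto the subspace 𝔞_Q := {Y ∈ V : ⟨α, Y⟩ = 0 for all α ∈ Q}. Then there exists a constant c > 0 such that ‖X‖ ≤ c‖q(X)‖ for every X ∈ V satisfying the following conditions: X ∈ span(Q⁺); ⟨α, X⟩ = 0 for all α ∈ Q₀; τ_Q^{Q⁺}(X)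 = 1; and ⟨ϖ, X⟩ ≤ 0 for every member ϖ of the dual basis Δ̂_{Q₀}^{Q} of Δ_{Q₀}^{Q} in V_{Q₀}^{Q}. -/
open scoped RealInnerProductSpace Classical

variable {V : Type*} [NormedAddCommGroup V] [InnerProductSpace ℝ V] [FiniteDimensional ℝ V]
  [DecidableEq V]

private lemma mem_orth_of_forall {s : Set V} {x : V} (h : ∀ v ∈ s, ⟪v, x⟫ = 0) :
    x ∈ (Submodule.span ℝ s)ᗮ := by
  rw [Submodule.mem_orthogonal]
  intro u hu
  have hle : Submodule.span ℝ s ≤ LinearMap.ker ((innerSL ℝ x : V →L[ℝ] ℝ) : V →ₗ[ℝ] ℝ) := by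
    rw [Submodule.span_le]
    intro v hv
    have : ⟪x, v⟫ = 0 := by rw [real_inner_comm]; exact h v hv
    simpa [LinearMap.mem_ker] using this
  have hk := hle hu
  simp only [SetLike.mem_coe, LinearMap.mem_ker, ContinuousLinearMap.coe_coe, innerSL_apply_apply] at hk
  rw [real_inner_comm]; exact hk

/-- Core vanishing claim: with weak inequalities, `q(X) = 0` forces `X = 0`. -/
private lemma core_claim
    (Δ : Finset V)
    (hli : LinearIndependent ℝ ((↑) : ↥(Δ : Set V) → V))
    (hspan : Submodule.span ℝ (Δ : Set V) = ⊤)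
    (θ : V ≃ₗᵢ[ℝ] V) (hθΔ : Finset.image (⇑θ) Δ = Δ)
    (Q : Finset V) (hQΔ : Q ⊆ Δ)
    (Q₀ Qplus : Finset V)
    (hQ₀ : Q₀ = Q.filter fun α => θ α ∈ Q)
    (hQplus : Qplus = Δ.filter fun β => ∃ α ∈ Q, ∃ n : ℤ, (θ ^ n) α = β)
    (ϖ : V → V)
    (hϖmem : ∀ γ ∈ Q \ Q₀,
      ϖ γ ∈ Submodule.span ℝ (Q : Set V) ⊓ (Submodule.span ℝ (Q₀ : Set V))ᗮ)
    (hϖdual : ∀ γ ∈ Q \ Q₀, ∀ δ ∈ Q \ Q₀,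
      ⟪ϖ γ, projPerp Q₀ δ⟫ = if δ = γ then 1 else 0)
    (X : V)
    (hX1 : X ∈ Submodule.span ℝ (Qplus : Set V))
    (hX2 : ∀ α ∈ Q₀, ⟪α, X⟫ = 0)
    (hX3 : ∀ γ ∈ Qplus \ Q, 0 ≤ ⟪projPerp Q γ, X⟫)
    (hX4 : ∀ γ ∈ Q \ Q₀, ⟪ϖ γ, X⟫ ≤ 0)
    (hq : projPerp Q (X - θ X) = 0) : X = 0 := by
  -- basic set facts
  have hQ₀Q : Q₀ ⊆ Q := by rw [hQ₀]; exact Finset.filter_subset _ _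
  have hθQ₀ : ∀ α ∈ Q₀, θ α ∈ Q := by
    intro α hα; rw [hQ₀] at hα; exact (Finset.mem_filter.1 hα).2
  have hθΔmem : ∀ β ∈ Δ, θ β ∈ Δ := by
    intro β hβ; rw [← hθΔ]; exact Finset.mem_image_of_mem _ hβ
  have hQQplus : Q ⊆ Qplus := by
    intro β hβ
    rw [hQplus, Finset.mem_filter]
    exact ⟨hQΔ hβ, β, hβ, 0, by simp⟩
  have hθQnotQ : ∀ γ ∈ Q \ Q₀, θ γ ∈ Qplus \ Q := by
    intro γ hγ
    rw [Finset.mem_sdiff] at hγ ⊢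
    constructor
    · rw [hQplus, Finset.mem_filter]
      exact ⟨hθΔmem _ (hQΔ hγ.1), γ, hγ.1, 1, by simp⟩
    · intro hc
      exact hγ.2 (by rw [hQ₀, Finset.mem_filter]; exact ⟨hγ.1, hc⟩)
  set S : Submodule ℝ V := Submodule.span ℝ (Q : Set V) with hS
  set S₀ : Submodule ℝ V := Submodule.span ℝ (Q₀ : Set V) with hS₀
  set W : V := (Submodule.orthogonalProjectionOnto Sᗮ X : V) with hW
  have hWmem : W ∈ Sᗮ := SetLike.coe_mem _
  have hWQ : ∀ v ∈ S, ⟪v, W⟫ = 0 := fun v hv => (Submodule.mem_orthogonal S W).1 hWmem v hv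
  set U : V := X - W with hUdef
  have hUS : U ∈ S := by
    have h := Submodule.sub_starProjection_mem_orthogonal (K := Sᗮ) X
    rwa [Submodule.orthogonal_orthogonal] at h
  have hXθS : X - θ X ∈ S := by
    have h : X - θ X - (Submodule.orthogonalProjectionOnto Sᗮ (X - θ X) : V) ∈ Sᗮᗮ :=
      Submodule.sub_starProjection_mem_orthogonal (K := Sᗮ) (X - θ X)
    rw [Submodule.orthogonal_orthogonal] at h
    have hz : (Submodule.orthogonalProjectionOnto Sᗮ (X - θ X) : V) = 0 := hq
    rwa [hz, sub_zero] at h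
  -- U is orthogonal to span Q₀
  have hUQ₀ : ∀ α ∈ (Q₀ : Set V), ⟪α, U⟫ = 0 := by
    intro α hα
    have hαQ₀ : α ∈ Q₀ := hα
    have h1 : ⟪α, X⟫ = 0 := hX2 α hαQ₀
    have h2 : ⟪α, W⟫ = 0 := hWQ α (Submodule.subset_span (hQ₀Q hαQ₀))
    rw [hUdef, inner_sub_right, h1, h2, sub_zero]
  have hUmem₀ : U ∈ S₀ᗮ := mem_orth_of_forall hUQ₀
  -- representation of U
  obtain ⟨c, -, hc⟩ := Submodule.mem_span_finset.1 hUS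
  have hP₀U : (Submodule.orthogonalProjectionOnto S₀ᗮ U : V) = U := Submodule.starProjection_eq_self_iff.2 hUmem₀
  have hP₀zero : ∀ γ ∈ Q₀, projPerp Q₀ γ = (0 : V) := by
    intro γ hγ
    have : γ ∈ S₀ᗮᗮ := by
      rw [Submodule.orthogonal_orthogonal]; exact Submodule.subset_span hγ
    have h0 : Submodule.orthogonalProjectionOnto S₀ᗮ γ = 0 :=
      Submodule.orthogonalProjectionOnto_apply_of_mem_orthogonal this
    show (Submodule.orthogonalProjectionOnto S₀ᗮ γ : V) = 0
    rw [h0]; rfl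
  have hrepU : U = ∑ γ ∈ Q \ Q₀, c γ • projPerp Q₀ γ := by
    have hmap : (Submodule.orthogonalProjectionOnto S₀ᗮ (∑ γ ∈ Q, c γ • γ) : V)
        = ∑ γ ∈ Q, c γ • projPerp Q₀ γ := by
      rw [map_sum]
      push_cast [Submodule.coe_sum]
      refine Finset.sum_congr rfl fun γ _ => ?_
      rw [map_smul]; rfl
    have h1 : U = ∑ γ ∈ Q, c γ • projPerp Q₀ γ := by
      rw [hc] at hmap
      conv_lhs => rw [← hP₀U]
      exact hmap
    rw [h1, ← Finset.sum_sdiff hQ₀Q]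
    have h2 : ∑ γ ∈ Q₀, c γ • projPerp Q₀ γ = 0 := by
      refine Finset.sum_eq_zero fun γ hγ => ?_
      rw [hP₀zero γ hγ, smul_zero]
    rw [h2, add_zero]
  -- coefficients are the ϖ-pairings, hence nonpositive
  have hcval : ∀ δ ∈ Q \ Q₀, c δ = ⟪ϖ δ, X⟫ := by
    intro δ hδ
    have hϖS : ϖ δ ∈ S := (Submodule.mem_inf.1 (hϖmem δ hδ)).1
    have hϖW : ⟪ϖ δ, W⟫ = 0 := hWQ (ϖ δ) hϖS
    have h1 : ⟪ϖ δ, U⟫ = ⟪ϖ δ, X⟫ := by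
      rw [hUdef, inner_sub_right, hϖW, sub_zero]
    have h2 : ⟪ϖ δ, U⟫ = c δ := by
      rw [hrepU, inner_sum]
      have hterm : ∀ γ ∈ Q \ Q₀,
          ⟪ϖ δ, c γ • projPerp Q₀ γ⟫ = if γ = δ then c γ else 0 := by
        intro γ hγ
        rw [real_inner_smul_right, hϖdual δ hδ γ hγ]
        by_cases h : γ = δ <;> simp [h]
      rw [Finset.sum_congr rfl hterm, Finset.sum_ite_eq' (Q \ Q₀) δ c, if_pos hδ]
    rw [← h1, h2]
  have hcnonpos : ∀ δ ∈ Q \ Q₀, c δ ≤ 0 := fun δ hδ => (hcval δ hδ) ▸ hX4 δ hδ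
  -- key inner product computations
  have hWθγ : ∀ γ ∈ Q \ Q₀, ⟪W, θ (projPerp Q₀ γ)⟫ = ⟪projPerp Q (θ γ), X⟫ := by
    intro γ hγ
    have hres : γ - projPerp Q₀ γ ∈ S₀ := by
      have h := Submodule.sub_starProjection_mem_orthogonal (K := S₀ᗮ) γ
      rwa [Submodule.orthogonal_orthogonal] at h
    have hθres : θ (γ - projPerp Q₀ γ) ∈ S := by
      have h1 : θ (γ - projPerp Q₀ γ) ∈ Submodule.span ℝ ((⇑θ) '' (Q₀ : Set V)) := by
        have := Submodule.apply_mem_span_image_of_mem_span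
          (θ.toLinearEquiv : V →ₗ[ℝ] V) hres
        simpa using this
      refine Submodule.span_le.2 ?_ h1
      rintro - ⟨α, hα, rfl⟩
      exact Submodule.subset_span (hθQ₀ α hα)
    have hsplit : θ (projPerp Q₀ γ) = θ γ - θ (γ - projPerp Q₀ γ) := by
      rw [map_sub]; abel
    rw [hsplit, inner_sub_right]
    have h0 : ⟪W, θ (γ - projPerp Q₀ γ)⟫ = 0 := by
      rw [real_inner_comm]; exact hWQ _ hθres
    rw [h0, sub_zero]
    have : ⟪W, θ γ⟫ = ⟪X, projPerp Q (θ γ)⟫ := by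
      rw [hW]
      exact Submodule.inner_starProjection_left_eq_right (K := Sᗮ) X (θ γ)
    rw [this, real_inner_comm]
  -- split θ X
  have hXUW : X = U + W := by rw [hUdef]; abel
  have hPθX : (Submodule.orthogonalProjectionOnto Sᗮ (θ X) : V) = W := by
    have h1 : Submodule.orthogonalProjectionOnto Sᗮ (X - θ X) = 0 := by
      have : (Submodule.orthogonalProjectionOnto Sᗮ (X - θ X) : V) = 0 := hq
      exact_mod_cast Submodule.coe_eq_zero.1 this
    have h2 := map_sub (Submodule.orthogonalProjectionOnto Sᗮ) X (θ X)
    rw [h1] at h2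
    have h3 : Submodule.orthogonalProjectionOnto Sᗮ (θ X) = Submodule.orthogonalProjectionOnto Sᗮ X := by
      have h2' := h2.symm
      rw [sub_eq_zero] at h2'
      exact h2'.symm
    rw [h3, hW]
  have hinnerWθX : ⟪W, θ X⟫ = ‖W‖ ^ 2 := by
    have h1 : ⟪W, θ X⟫ = ⟪X, (Submodule.orthogonalProjectionOnto Sᗮ (θ X) : V)⟫ := by
      rw [hW]; exact Submodule.inner_starProjection_left_eq_right (K := Sᗮ) X (θ X)
    rw [h1, hPθX]
    have h2 : ⟪X, W⟫ - ⟪W, W⟫ = ⟪U, W⟫ := by rw [hUdef, inner_sub_left]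
    have h3 : ⟪U, W⟫ = 0 := hWQ U hUS
    have h4 : ⟪W, W⟫ = ‖W‖ ^ 2 := real_inner_self_eq_norm_sq W
    linarith
  set A : ℝ := ⟪W, θ U⟫ with hA
  set B : ℝ := ⟪W, θ W⟫ with hB
  have hAB : A + B = ‖W‖ ^ 2 := by
    rw [hA, hB, ← inner_add_right, ← map_add, ← hXUW, hinnerWθX]
  have hAnonpos : A ≤ 0 := by
    rw [hA]
    have hθU : θ U = ∑ γ ∈ Q \ Q₀, c γ • θ (projPerp Q₀ γ) := by
      rw [hrepU, map_sum]
      exact Finset.sum_congr rfl fun γ _ => by rw [map_smul]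
    rw [hθU, inner_sum]
    refine Finset.sum_nonpos fun γ hγ => ?_
    rw [real_inner_smul_right, hWθγ γ hγ]
    exact mul_nonpos_of_nonpos_of_nonneg (hcnonpos γ hγ) (hX3 (θ γ) (hθQnotQ γ hγ))
  have hBle : B ≤ ‖W‖ ^ 2 := by
    rw [hB]
    calc ⟪W, θ W⟫ ≤ ‖W‖ * ‖θ W‖ := real_inner_le_norm W (θ W)
    _ = ‖W‖ ^ 2 := by rw [θ.norm_map]; ring
  have hA0 : A = 0 := by linarith
  have hBeq : B = ‖W‖ ^ 2 := by linarith
  -- θ fixes W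
  have hθW : θ W = W := by
    have h : ⟪W - θ W, W - θ W⟫ = 0 := by
      rw [inner_sub_left, inner_sub_right, inner_sub_right]
      have e1 : ⟪W, W⟫ = ‖W‖ ^ 2 := real_inner_self_eq_norm_sq W
      have e2 : ⟪θ W, θ W⟫ = ‖W‖ ^ 2 := by
        rw [θ.inner_map_map]; exact e1
      have e3 : ⟪θ W, W⟫ = B := by rw [real_inner_comm]
      have e4 : ⟪W, θ W⟫ = B := rfl
      rw [e1, e2, e3, e4, hBeq]; ring
    have := inner_self_eq_zero.1 h
    rw [sub_eq_zero] at this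
    exact this.symm
  have hθWfix : ∀ n : ℤ, (θ ^ n) W = W := by
    have hWfix : θ W = W := hθW
    have hWinv : θ⁻¹ W = W := by
      have : θ (θ⁻¹ W) = W := by
        show (θ * θ⁻¹) W = W
        rw [mul_inv_cancel]
        rfl
      apply θ.injective
      rw [this, hWfix]
    intro n
    induction n using Int.induction_on with
    | zero => rfl
    | succ k ih =>
      rw [zpow_add_one]
      show (θ ^ (k : ℤ)) (θ W) = W
      rw [hWfix]; exact ih
    | pred k ih =>
      rw [zpow_sub_one]
      show (θ ^ (-k : ℤ)) (θ⁻¹ W) = W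
      rw [hWinv]; exact ih
  -- W is orthogonal to span Qplus, hence W = 0
  have hWQplus : ∀ β ∈ (Qplus : Set V), ⟪β, W⟫ = 0 := by
    intro β hβ
    have hβ' : β ∈ Qplus := hβ
    rw [hQplus, Finset.mem_filter] at hβ'
    obtain ⟨α, hαQ, n, hn⟩ := hβ'.2
    have : ⟪β, W⟫ = ⟪(θ ^ n) α, (θ ^ n) W⟫ := by rw [hθWfix n, hn]
    rw [this, (θ ^ n).inner_map_map]
    exact hWQ α (Submodule.subset_span hαQ)
  have hW0 : W = 0 := by
    have hWperpP : W ∈ (Submodule.span ℝ (Qplus : Set V))ᗮ := mem_orth_of_forall hWQplus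
    have h1 : ⟪W, W⟫ = 0 := by
      have hWX : ⟪W, X⟫ = 0 := by
        rw [real_inner_comm]
        exact (Submodule.mem_orthogonal _ W).1 hWperpP X hX1
      have hWU : ⟪W, U⟫ = 0 := by rw [real_inner_comm]; exact hWQ U hUS
      have hXU : X - U = W := by rw [hUdef]; abel
      calc ⟪W, W⟫ = ⟪W, X - U⟫ := by rw [hXU]
      _ = ⟪W, X⟫ - ⟪W, U⟫ := inner_sub_right _ _ _
      _ = 0 := by rw [hWX, hWU, sub_zero]
    exact inner_self_eq_zero.1 h1
  have hXS : X ∈ S := by rw [hXUW, hW0, add_zero]; exact hUS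
  -- coordinates with respect to the basis Δ
  have hspan' : ⊤ ≤ Submodule.span ℝ (Set.range ((↑) : ↥(Δ : Set V) → V)) := by
    rw [Subtype.range_coe]; rw [hspan]
  set b : Module.Basis ↥(Δ : Set V) ℝ V := Module.Basis.mk hli hspan' with hb
  have hbapply : ∀ i : ↥(Δ : Set V), b i = (i : V) := fun i => Module.Basis.mk_apply hli hspan' i
  -- vanishing of coordinates outside a subset
  have hreprzero : ∀ (T : Finset V), ↑T ⊆ (Δ : Set V) → ∀ v ∈ Submodule.span ℝ (T : Set V),
      ∀ i : ↥(Δ : Set V), (i : V) ∉ T → b.repr v i = 0 := by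
    intro T hT v hv i hi
    have hle : Submodule.span ℝ (T : Set V) ≤
        LinearMap.ker ((Finsupp.lapply i).comp b.repr.toLinearMap) := by
      rw [Submodule.span_le]
      intro a ha
      have haΔ : a ∈ (Δ : Set V) := hT ha
      have : a = b ⟨a, haΔ⟩ := (hbapply ⟨a, haΔ⟩).symm
      simp only [SetLike.mem_coe, LinearMap.mem_ker, LinearMap.coe_comp, Function.comp_apply,
        Finsupp.lapply_apply, LinearEquiv.coe_toLinearMap]
      rw [this, b.repr_self]
      rw [Finsupp.single_apply]
      rw [if_neg]
      intro hcontra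
      apply hi
      rw [← hcontra]
      exact ha
    have := hle hv
    simpa using this
  -- the action of θ on coordinates
  have hθidx : ∀ i : ↥(Δ : Set V), θ (i : V) ∈ (Δ : Set V) := by
    intro i
    have : (i : V) ∈ Δ := i.2
    exact_mod_cast hθΔmem _ this
  set τ : ↥(Δ : Set V) → ↥(Δ : Set V) := fun i => ⟨θ (i : V), hθidx i⟩ with hτ
  have hτinj : Function.Injective τ := by
    intro i j hij
    apply Subtype.ext
    apply θ.injective
    exact congrArg ((↑) : ↥(Δ : Set V) → V) hij
  have hreprθ : ∀ (v : V) (i : ↥(Δ : Set V)), b.repr (θ v) (τ i) = b.repr v i := by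
    intro v i
    have hfg : (Finsupp.lapply (τ i)).comp (b.repr.toLinearMap.comp
          (θ.toLinearEquiv : V →ₗ[ℝ] V))
        = (Finsupp.lapply i).comp b.repr.toLinearMap := by
      apply b.ext
      intro j
      simp only [LinearMap.coe_comp, Function.comp_apply, LinearEquiv.coe_coe,
        LinearIsometryEquiv.coe_toLinearEquiv, Finsupp.lapply_apply,
        LinearEquiv.coe_toLinearMap]
      have h1 : θ (b j) = b (τ j) := by rw [hbapply j, hbapply (τ j)]
      rw [h1, b.repr_self, b.repr_self, Finsupp.single_apply, Finsupp.single_apply]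
      by_cases h : j = i
      · rw [if_pos (by rw [h]), if_pos h]
      · rw [if_neg (fun hc => h (hτinj hc)), if_neg h]
    have := congrArg (fun f => f v) hfg
    simpa using this
  -- conclude coordinates vanish off Q₀
  have hcoordX : ∀ i : ↥(Δ : Set V), (i : V) ∉ Q₀ → b.repr X i = 0 := by
    intro i hi
    by_cases hiQ : (i : V) ∈ Q
    · -- then i ∈ Q \ Q₀, and θ i ∉ Q
      have hiQQ₀ : (i : V) ∈ Q \ Q₀ := Finset.mem_sdiff.2 ⟨hiQ, hi⟩
      have hθi : θ (i : V) ∈ Qplus \ Q := hθQnotQ _ hiQQ₀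
      have hθiQ : ((τ i : ↥(Δ : Set V)) : V) ∉ Q := by
        have := (Finset.mem_sdiff.1 hθi).2
        exact this
      have e1 : b.repr X (τ i) = 0 :=
        hreprzero Q (by exact_mod_cast hQΔ) X hXS (τ i) hθiQ
      have e2 : b.repr (X - θ X) (τ i) = 0 :=
        hreprzero Q (by exact_mod_cast hQΔ) (X - θ X) hXθS (τ i) hθiQ
      have e3 : b.repr (θ X) (τ i) = 0 := by
        have := map_sub b.repr X (θ X)
        have h4 : b.repr X (τ i) - b.repr (θ X) (τ i) = 0 := by
          rw [← Finsupp.sub_apply, ← map_sub]; exact e2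
        rw [e1] at h4; linarith
      rw [← hreprθ X i]; exact e3
    · exact hreprzero Q (by exact_mod_cast hQΔ) X hXS i hiQ
  -- hence X ∈ span Q₀, while X ⊥ span Q₀
  have hXQ₀ : X ∈ S₀ := by
    have hsum := b.sum_repr X
    rw [← hsum]
    refine Submodule.sum_mem _ fun i _ => ?_
    by_cases hi : (i : V) ∈ Q₀
    · exact Submodule.smul_mem _ _ (Submodule.subset_span (by rw [hbapply i]; exact_mod_cast hi))
    · rw [hcoordX i hi, zero_smul]; exact Submodule.zero_mem _
  have hXperp : X ∈ S₀ᗮ := mem_orth_of_forall (fun v hv => hX2 v hv)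
  have : ⟪X, X⟫ = 0 := (Submodule.mem_orthogonal S₀ X).1 hXperp X hXQ₀
  exact inner_self_eq_zero.1 this

/-- Let `Δ` be an obtuse basis of `V` and `θ` a linear isometry with
`θ(Δ) = Δ`. Let `Q ⊆ Δ`, `Q₀ = Q ∩ θ⁻¹(Q)`, and `Q⁺` the union of the `θ`-orbits of the
elements of `Q`. Let `q(X)` be the orthogonal projection of `X − θ X` onto
`𝔞_Q = (span Q)ᗮ`. Then there is `c > 0` such that `‖X‖ ≤ c ‖q(X)‖` for every `X` with:
`X ∈ span Q⁺`; `⟪α, X⟫ = 0` for all `α ∈ Q₀`; `τ_Q^{Q⁺}(X) = 1`; and `⟪ϖ, X⟫ ≤ 0` for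
every member `ϖ` of the dual basis `Δ̂_{Q₀}^{Q}`. -/
theorem stmt_18
    (Δ : Finset V)
    (hli : LinearIndependent ℝ ((↑) : ↥(Δ : Set V) → V))
    (hspan : Submodule.span ℝ (Δ : Set V) = ⊤)
    (hobtuse : ∀ α ∈ Δ, ∀ β ∈ Δ, α ≠ β → ⟪α, β⟫ ≤ 0)
    (θ : V ≃ₗᵢ[ℝ] V) (hθΔ : Finset.image (⇑θ) Δ = Δ)
    (Q : Finset V) (hQΔ : Q ⊆ Δ)
    (Q₀ Qplus : Finset V)
    (hQ₀ : Q₀ = Q.filter fun α => θ α ∈ Q)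
    (hQplus : Qplus = Δ.filter fun β => ∃ α ∈ Q, ∃ n : ℤ, (θ ^ n) α = β)
    -- `ϖ` is the dual basis `Δ̂_{Q₀}^{Q}` of `Δ_{Q₀}^{Q}` in `V_{Q₀}^{Q}`
    (ϖ : V → V)
    (hϖmem : ∀ γ ∈ Q \ Q₀,
      ϖ γ ∈ Submodule.span ℝ (Q : Set V) ⊓ (Submodule.span ℝ (Q₀ : Set V))ᗮ)
    (hϖdual : ∀ γ ∈ Q \ Q₀, ∀ δ ∈ Q \ Q₀,
      ⟪ϖ γ, projPerp Q₀ δ⟫ = if δ = γ then 1 else 0) :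
    ∃ c : ℝ, 0 < c ∧ ∀ X : V,
      X ∈ Submodule.span ℝ (Qplus : Set V) →
      (∀ α ∈ Q₀, ⟪α, X⟫ = 0) →
      (∀ γ ∈ Qplus \ Q, 0 < ⟪projPerp Q γ, X⟫) →
      (∀ γ ∈ Q \ Q₀, ⟪ϖ γ, X⟫ ≤ 0) →
      ‖X‖ ≤ c * ‖projPerp Q (X - θ X)‖ := by
  classical
  -- the closed cone of weak conditions
  set C : Set V := {X | X ∈ Submodule.span ℝ (Qplus : Set V) ∧
      (∀ α ∈ Q₀, ⟪α, X⟫ = 0) ∧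
      (∀ γ ∈ Qplus \ Q, 0 ≤ ⟪projPerp Q γ, X⟫) ∧
      (∀ γ ∈ Q \ Q₀, ⟪ϖ γ, X⟫ ≤ 0)} with hC
  -- zero lemma on C
  have hzero : ∀ X ∈ C, projPerp Q (X - θ X) = 0 → X = 0 := by
    intro X hX hq
    exact core_claim Δ hli hspan θ hθΔ Q hQΔ Q₀ Qplus hQ₀ hQplus ϖ hϖmem hϖdual X
      hX.1 hX.2.1 hX.2.2.1 hX.2.2.2 hq
  -- continuity of q and of the norm functional
  have hqcont : Continuous (fun X : V => projPerp Q (X - θ X)) := by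
    have h1 : Continuous fun X : V => X - θ X := continuous_id.sub θ.continuous
    have h2 : Continuous fun v : V =>
        ((Submodule.orthogonalProjectionOnto (Submodule.span ℝ (Q : Set V))ᗮ v : V)) :=
      continuous_subtype_val.comp (Submodule.orthogonalProjectionOnto _).continuous
    exact h2.comp h1
  have hfcont : Continuous (fun X : V => ‖projPerp Q (X - θ X)‖) := hqcont.norm
  -- C is closed
  have hCclosed : IsClosed C := by
    have h0 : IsClosed ((Submodule.span ℝ (Qplus : Set V) : Set V)) :=
      Submodule.closed_of_finiteDimensional _
    have h1 : IsClosed {X : V | ∀ α ∈ Q₀, ⟪α, X⟫ = 0} := by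
      have : {X : V | ∀ α ∈ Q₀, ⟪α, X⟫ = 0} = ⋂ α ∈ Q₀, {X : V | ⟪α, X⟫ = 0} := by
        ext X; simp
      rw [this]
      exact isClosed_biInter fun α _ =>
        isClosed_eq (continuous_const.inner continuous_id) continuous_const
    have h2 : IsClosed {X : V | ∀ γ ∈ Qplus \ Q, 0 ≤ ⟪projPerp Q γ, X⟫} := by
      have : {X : V | ∀ γ ∈ Qplus \ Q, 0 ≤ ⟪projPerp Q γ, X⟫}
          = ⋂ γ ∈ Qplus \ Q, {X : V | 0 ≤ ⟪projPerp Q γ, X⟫} := by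
        ext X; simp
      rw [this]
      exact isClosed_biInter fun γ _ =>
        isClosed_le continuous_const (continuous_const.inner continuous_id)
    have h3 : IsClosed {X : V | ∀ γ ∈ Q \ Q₀, ⟪ϖ γ, X⟫ ≤ 0} := by
      have : {X : V | ∀ γ ∈ Q \ Q₀, ⟪ϖ γ, X⟫ ≤ 0}
          = ⋂ γ ∈ Q \ Q₀, {X : V | ⟪ϖ γ, X⟫ ≤ 0} := by
        ext X; simp
      rw [this]
      exact isClosed_biInter fun γ _ =>
        isClosed_le (continuous_const.inner continuous_id) continuous_const
    have : C = ((Submodule.span ℝ (Qplus : Set V) : Set V)) ∩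
        ({X : V | ∀ α ∈ Q₀, ⟪α, X⟫ = 0} ∩
          ({X : V | ∀ γ ∈ Qplus \ Q, 0 ≤ ⟪projPerp Q γ, X⟫} ∩
            {X : V | ∀ γ ∈ Q \ Q₀, ⟪ϖ γ, X⟫ ≤ 0})) := by
      ext X; simp [hC, Set.mem_setOf_eq, Set.mem_inter_iff, and_assoc]
    rw [this]
    exact h0.inter (h1.inter (h2.inter h3))
  -- membership of normalizations
  have hCscale : ∀ X ∈ C, ∀ r : ℝ, 0 ≤ r → r • X ∈ C := by
    intro X hX r hr
    refine ⟨Submodule.smul_mem _ _ hX.1, ?_, ?_, ?_⟩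
    · intro α hα; rw [real_inner_smul_right, hX.2.1 α hα, mul_zero]
    · intro γ hγ; rw [real_inner_smul_right]
      exact mul_nonneg hr (hX.2.2.1 γ hγ)
    · intro γ hγ; rw [real_inner_smul_right]
      exact mul_nonpos_of_nonneg_of_nonpos hr (hX.2.2.2 γ hγ)
  -- strict conditions imply membership in C
  have hstrict : ∀ X : V,
      X ∈ Submodule.span ℝ (Qplus : Set V) →
      (∀ α ∈ Q₀, ⟪α, X⟫ = 0) →
      (∀ γ ∈ Qplus \ Q, 0 < ⟪projPerp Q γ, X⟫) →
      (∀ γ ∈ Q \ Q₀, ⟪ϖ γ, X⟫ ≤ 0) → X ∈ C := by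
    intro X h1 h2 h3 h4
    exact ⟨h1, h2, fun γ hγ => (h3 γ hγ).le, h4⟩
  set K : Set V := C ∩ Metric.sphere (0 : V) 1 with hK
  have hKcompact : IsCompact K := (isCompact_sphere 0 1).inter_left hCclosed
  by_cases hKne : K.Nonempty
  · obtain ⟨X₀, hX₀K, hmin⟩ :=
      hKcompact.exists_isMinOn hKne hfcont.continuousOn
    set m : ℝ := ‖projPerp Q (X₀ - θ X₀)‖ with hm
    have hmpos : 0 < m := by
      rcases lt_or_eq_of_le (norm_nonneg (projPerp Q (X₀ - θ X₀))) with h | h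
      · exact h
      · exfalso
        have hq0 : projPerp Q (X₀ - θ X₀) = 0 := by
          rw [← norm_eq_zero]; exact h.symm
        have : X₀ = 0 := hzero X₀ hX₀K.1 hq0
        have hs : ‖X₀‖ = 1 := by
          have := hX₀K.2
          simpa using this
        rw [this] at hs; simp at hs
    refine ⟨m⁻¹, inv_pos.2 hmpos, ?_⟩
    intro X h1 h2 h3 h4
    have hXC : X ∈ C := hstrict X h1 h2 h3 h4
    by_cases hX0 : X = 0
    · rw [hX0]
      simp only [norm_zero]
      positivity
    · set r : ℝ := ‖X‖ with hr
      have hrpos : 0 < r := norm_pos_iff.2 hX0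
      set X' : V := r⁻¹ • X with hX'
      have hX'C : X' ∈ C := hCscale X hXC r⁻¹ (by positivity)
      have hnx : ‖X'‖ = 1 := by
        rw [hX', norm_smul, Real.norm_eq_abs, abs_inv, abs_of_pos hrpos]
        rw [hr] at hrpos ⊢
        field_simp
      have hX'sphere : X' ∈ Metric.sphere (0 : V) 1 :=
        mem_sphere_iff_norm.2 (by rw [sub_zero]; exact hnx)
      have hX'K : X' ∈ K := ⟨hX'C, hX'sphere⟩
      have hfX' : ‖projPerp Q (X' - θ X')‖ = r⁻¹ * ‖projPerp Q (X - θ X)‖ := by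
        have e1 : X' - θ X' = r⁻¹ • (X - θ X) := by
          rw [hX', map_smul, smul_sub]
        rw [e1]
        have e2 : projPerp Q (r⁻¹ • (X - θ X)) = r⁻¹ • projPerp Q (X - θ X) := by
          show ((Submodule.orthogonalProjectionOnto _ (r⁻¹ • (X - θ X)) : V)) = _
          rw [map_smul]; rfl
        rw [e2, norm_smul, Real.norm_eq_abs, abs_inv, abs_of_pos hrpos]
      have hmin' : m ≤ r⁻¹ * ‖projPerp Q (X - θ X)‖ := by
        have h5 : ‖projPerp Q (X₀ - θ X₀)‖ ≤ ‖projPerp Q (X' - θ X')‖ := hmin hX'K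
        rw [hfX'] at h5
        exact h5
      have hfin : r * m ≤ ‖projPerp Q (X - θ X)‖ := by
        have := mul_le_mul_of_nonneg_left hmin' hrpos.le
        calc r * m ≤ r * (r⁻¹ * ‖projPerp Q (X - θ X)‖) := this
        _ = ‖projPerp Q (X - θ X)‖ := by field_simp
      have hfin2 : r ≤ ‖projPerp Q (X - θ X)‖ / m := by
        rw [le_div_iff₀ hmpos]
        linarith [hfin]
      rw [div_eq_inv_mul] at hfin2
      exact hfin2
  · -- K empty: every admissible X is zero
    refine ⟨1, one_pos, ?_⟩
    intro X h1 h2 h3 h4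
    have hXC : X ∈ C := hstrict X h1 h2 h3 h4
    by_cases hX0 : X = 0
    · rw [hX0]; simp only [norm_zero]; positivity
    · exfalso
      apply hKne
      set r : ℝ := ‖X‖ with hr
      have hrpos : 0 < r := norm_pos_iff.2 hX0
      refine ⟨r⁻¹ • X, hCscale X hXC r⁻¹ (by positivity), ?_⟩
      refine mem_sphere_iff_norm.2 ?_
      rw [sub_zero, norm_smul, Real.norm_eq_abs, abs_inv, abs_of_pos hrpos]
      rw [hr] at hrpos ⊢
      field_simp
end
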